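/- The maps X_{i,j}^{r,s} : P_{i+j}^{(s)} → Pᵢ^{(r)} given by precomposition with the path α_{i,j} (extended by zero on other summands), for 0 ≤ i ≤ n−1, 0 ≤ j ≤ ℓ−1, 0 ≤ r ≤ mᵢ−1, 0 ≤ s ≤ m_{i+j}−1, form a k-basis of the NSY algebra B_{n,ℓ}(m₀,…,m_{n−1}). -/
import Mathlib


/-!
Setup as in the NSY algebra `B_{n,ℓ}(m₀,…,m_{n-1}) = End_{B_{n,ℓ}}(M)`, `M = ⊕ᵢ Pᵢ^{⊕ mᵢ}`,
realized on the vector space `ModM`.  The map `X_{i,j}^{r,s} : P_{i+j}^{(s)} → Pᵢ^{(r)}` is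
precomposition with the path `α_{i,j}` (sending `α_{i+j,c}^{(s)} ↦ α_{i,j+c}^{(r)}`, zero when
`j+c ≥ ℓ`), extended by zero on the other summands.  Statement 5: these maps form a `k`-basis
of the NSY algebra.
-/

abbrev ModM (k : Type*) (n ℓ : ℕ) (m : ZMod n → ℕ) : Type _ :=
  ((Σ i : ZMod n, Fin (m i)) × Fin ℓ) → k

noncomputable def ractM (k : Type*) [Field k] (n ℓ : ℕ) [NeZero n] (m : ZMod n → ℕ)
    (p : ZMod n) (b : Fin ℓ) (v : ModM k n ℓ m) : ModM k n ℓ m :=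
  fun t => if h : (b : ℕ) ≤ (t.2 : ℕ) ∧
      p = t.1.1 + (((t.2 : ℕ) - (b : ℕ) : ℕ) : ZMod n)
    then v (t.1, ⟨(t.2 : ℕ) - (b : ℕ), by omega⟩) else 0

def IsHomM (k : Type*) [Field k] (n ℓ : ℕ) [NeZero n] (m : ZMod n → ℕ)
    (φ : ModM k n ℓ m →ₗ[k] ModM k n ℓ m) : Prop :=
  ∀ (p : ZMod n) (b : Fin ℓ) (v : ModM k n ℓ m),
    φ (ractM k n ℓ m p b v) = ractM k n ℓ m p b (φ v)

noncomputable def nsySpace (k : Type*) [Field k] (n ℓ : ℕ) [NeZero n] (m : ZMod n → ℕ) :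
    Submodule k (ModM k n ℓ m →ₗ[k] ModM k n ℓ m) where
  carrier := {φ | IsHomM k n ℓ m φ}
  add_mem' := by
    intro φ ψ hφ hψ p b v
    simp only [IsHomM, LinearMap.add_apply, hφ p b v, hψ p b v]
    funext t; simp only [ractM, Pi.add_apply]; split <;> simp
  zero_mem' := by
    intro p b v
    simp only [LinearMap.zero_apply]
    funext t; simp only [ractM, Pi.zero_apply]; split <;> simp
  smul_mem' := by
    intro r φ hφ p b v
    simp only [IsHomM, LinearMap.smul_apply, hφ p b v]
    funext t; simp only [ractM, Pi.smul_apply]; split <;> simp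

/-- The index set of the maps `X_{i,j}^{r,s}`:
`i ∈ ZMod n`, `j ∈ Fin ℓ`, `r ∈ Fin (mᵢ)`, `s ∈ Fin (m_{i+j})`. -/
abbrev Idx (n ℓ : ℕ) (m : ZMod n → ℕ) : Type _ :=
  Σ (i : ZMod n) (j : Fin ℓ), Fin (m i) × Fin (m (i + ((j : ℕ) : ZMod n)))

/-- The endomorphism `X_{i,j}^{r,s}` of `M`: precomposition with `α_{i,j}`, i.e.
`α_{i+j,c}^{(s)} ↦ α_{i,j+c}^{(r)}` (zero if `j+c ≥ ℓ`), zero on all other summands. -/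
noncomputable def XL (k : Type*) [Field k] (n ℓ : ℕ) [NeZero n] (m : ZMod n → ℕ)
    (p : Idx n ℓ m) : ModM k n ℓ m →ₗ[k] ModM k n ℓ m where
  toFun v := fun t =>
    if h : t.1.1 = p.1 ∧ ((t.1.2 : ℕ) = (p.2.2.1 : ℕ)) ∧ (p.2.1 : ℕ) ≤ (t.2 : ℕ)
      then v (⟨p.1 + ((p.2.1 : ℕ) : ZMod n), p.2.2.2⟩, ⟨(t.2 : ℕ) - (p.2.1 : ℕ), by omega⟩)
      else 0
  map_add' := by intro x y; funext t; simp only [Pi.add_apply]; split <;> simp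
  map_smul' := by intro r x; funext t; simp only [Pi.smul_apply, RingHom.id_apply]; split <;> simp

section Helpers
variable {k : Type*} [Field k] {n ℓ : ℕ} [NeZero n] {m : ZMod n → ℕ}

lemma ractM_apply (p : ZMod n) (b : Fin ℓ) (v : ModM k n ℓ m) (t) :
    ractM k n ℓ m p b v t = if h : (b : ℕ) ≤ (t.2 : ℕ) ∧
        p = t.1.1 + (((t.2 : ℕ) - (b : ℕ) : ℕ) : ZMod n)
      then v (t.1, ⟨(t.2 : ℕ) - (b : ℕ), by omega⟩) else 0 := rfl

lemma XL_apply (p : Idx n ℓ m) (v : ModM k n ℓ m) (t) :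
    XL k n ℓ m p v t =
      if h : t.1.1 = p.1 ∧ ((t.1.2 : ℕ) = (p.2.2.1 : ℕ)) ∧ (p.2.1 : ℕ) ≤ (t.2 : ℕ)
      then v (⟨p.1 + ((p.2.1 : ℕ) : ZMod n), p.2.2.2⟩, ⟨(t.2 : ℕ) - (p.2.1 : ℕ), by omega⟩)
      else 0 := rfl

set_option maxHeartbeats 1000000 in
lemma XL_isHom (p : Idx n ℓ m) : IsHomM k n ℓ m (XL k n ℓ m p) := by
  obtain ⟨i, j, r, s⟩ := p
  intro q b v
  funext t
  obtain ⟨⟨a, x⟩, c⟩ := t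
  simp only [XL_apply, ractM_apply]
  have hcast : ∀ x y z : ℕ, y ≤ x → z ≤ x - y →
      ((y : ZMod n)) + ((x - y - z : ℕ) : ZMod n) = ((x - z : ℕ) : ZMod n) := by
    intro x y z hy hz
    rw [← Nat.cast_add]
    congr 1
    omega
  split_ifs <;> try rfl
  · exact congrArg v (congrArg (Prod.mk _) (Fin.eq_of_val_eq
      (show ((c:ℕ) - ↑j - ↑b) = ((c:ℕ) - ↑b - ↑j) by omega)))
  · rename_i h1 h2 h3 h4
    obtain ⟨ha, hx, hjc⟩ := h1; obtain ⟨hb, hq⟩ := h2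
    exact absurd ⟨ha, hx, by omega⟩ h4
  · rename_i h1 h2 h3
    obtain ⟨ha, hx, hjc⟩ := h1; obtain ⟨hb, hq⟩ := h2
    exact absurd ⟨by omega, by rw [hq, ha, add_assoc, hcast (c:ℕ) j b hjc hb]⟩ h3
  · rename_i h1 h2 h3 h4
    obtain ⟨ha, hx, hjc⟩ := h1; obtain ⟨hb, hq⟩ := h3; obtain ⟨-, -, hj⟩ := h4
    refine absurd ⟨by omega, ?_⟩ h2
    rw [hq, ha, add_assoc, hcast (c:ℕ) j b hjc (by omega)]
  · rename_i h1 h3 h4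
    obtain ⟨ha, hx, hj⟩ := h4; obtain ⟨hb, -⟩ := h3
    exact absurd ⟨ha, hx, by omega⟩ h1

lemma single_ract (hℓ : 1 ≤ ℓ) (a : ZMod n) (s : Fin (m a)) (c : Fin ℓ) :
    (Pi.single ((⟨a, s⟩ : Σ i : ZMod n, Fin (m i)), c) (1 : k) : ModM k n ℓ m)
      = ractM k n ℓ m a c (Pi.single (⟨a, s⟩, ⟨0, hℓ⟩) 1) := by
  funext t
  obtain ⟨⟨i', r'⟩, c'⟩ := t
  rw [ractM_apply]
  by_cases hc : (c : ℕ) ≤ (c' : ℕ) ∧ a = i' + (((c' : ℕ) - (c : ℕ) : ℕ) : ZMod n)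
  · rw [dif_pos hc]
    rw [Pi.single_apply, Pi.single_apply]
    congr 1
    simp only [Prod.mk.injEq, Fin.mk.injEq, Fin.ext_iff, eq_iff_iff]
    constructor
    · rintro ⟨h1, h2⟩
      exact ⟨h1, by omega⟩
    · rintro ⟨h1, h2⟩
      exact ⟨h1, by omega⟩
  · rw [dif_neg hc, Pi.single_apply, if_neg]
    intro heq
    apply hc
    injection heq with heq1 heq2
    subst heq2
    injection heq1 with ha hs
    subst ha
    refine ⟨le_refl _, ?_⟩
    rw [Nat.sub_self, Nat.cast_zero, add_zero]

end Helpers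

set_option maxHeartbeats 1600000

/-- The maps `X_{i,j}^{r,s}` form a `k`-basis of
`B_{n,ℓ}(m₀,…,m_{n-1}) = End_{B_{n,ℓ}}(M)`: they are linearly independent and span exactly the
subspace of `B_{n,ℓ}`-linear endomorphisms of `M`. -/
theorem nsy_basis
    (k : Type*) [Field k] (n ℓ : ℕ) [NeZero n] (hℓ : 1 ≤ ℓ) (hℓn : ℓ ≤ n - 1)
    (m : ZMod n → ℕ) (hm : ∀ i, 0 < m i) :
    LinearIndependent k (fun p : Idx n ℓ m => XL k n ℓ m p) ∧
    Submodule.span k (Set.range (fun p : Idx n ℓ m => XL k n ℓ m p))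
      = nsySpace k n ℓ m := by
  constructor
  · rw [Fintype.linearIndependent_iff]
    intro g hg q
    obtain ⟨i, j, r, s⟩ := q
    have h := congrFun (congrArg (fun F : ModM k n ℓ m →ₗ[k] ModM k n ℓ m =>
        F (Pi.single ((⟨i + ((j : ℕ) : ZMod n), s⟩ : Σ i : ZMod n, Fin (m i)),
          (⟨0, hℓ⟩ : Fin ℓ)) 1)) hg)
      ((⟨i, r⟩ : Σ i : ZMod n, Fin (m i)), j)
    simp only [LinearMap.sum_apply, Finset.sum_apply, LinearMap.smul_apply, Pi.smul_apply,
      smul_eq_mul, LinearMap.zero_apply, Pi.zero_apply] at h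
    rw [Finset.sum_eq_single (⟨i, j, (r, s)⟩ : Idx n ℓ m)] at h
    · rw [XL_apply, dif_pos ⟨rfl, rfl, le_refl _⟩, Pi.single_apply,
        if_pos (congrArg (Prod.mk _) (Fin.eq_of_val_eq
          (show (j : ℕ) - (j : ℕ) = 0 by omega))), mul_one] at h
      exact h
    · intro p _ hpq
      obtain ⟨i', j', r', s'⟩ := p
      rw [XL_apply]
      split_ifs with hcond
      · rw [Pi.single_apply, if_neg, mul_zero]
        intro heq
        apply hpq
        obtain ⟨h1, h2, h3⟩ := hcond
        have e1 : i = i' := h1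
        have e2 : (r : ℕ) = (r' : ℕ) := h2
        have e3 : (j' : ℕ) ≤ (j : ℕ) := h3
        injection heq with heq1 heq2
        have e4 : (j : ℕ) - (j' : ℕ) = 0 := congrArg Fin.val heq2
        injection heq1 with ha hs
        subst e1
        have ej : j' = j := Fin.eq_of_val_eq (by omega)
        subst ej
        have es : s' = s := eq_of_heq hs
        subst es
        have er : r' = r := Fin.eq_of_val_eq e2.symm
        subst er
        rfl
      · exact mul_zero _
    · intro h'
      exact absurd (Finset.mem_univ _) h'
  · apply le_antisymm
    · rw [Submodule.span_le]
      rintro _ ⟨p, rfl⟩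
      exact XL_isHom p
    · intro φ hφ
      have hφ' : IsHomM k n ℓ m φ := hφ
      have hrep : φ = ∑ p : Idx n ℓ m,
          (φ (Pi.single (⟨p.1 + ((p.2.1 : ℕ) : ZMod n), p.2.2.2⟩, (⟨0, hℓ⟩ : Fin ℓ)) 1)
            ((⟨p.1, p.2.2.1⟩ : Σ i : ZMod n, Fin (m i)), p.2.1)) • XL k n ℓ m p := by
        refine Module.Basis.ext (Pi.basisFun k _) fun u => ?_
        obtain ⟨⟨a, s⟩, c⟩ := u
        rw [Pi.basisFun_apply]
        conv_lhs => rw [single_ract hℓ a s c, hφ' a c]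
        funext t
        simp only [LinearMap.sum_apply, Finset.sum_apply, LinearMap.smul_apply, Pi.smul_apply,
          smul_eq_mul]
        rw [ractM_apply]
        by_cases hc : (c : ℕ) ≤ (t.2 : ℕ) ∧ a = t.1.1 + (((t.2 : ℕ) - (c : ℕ) : ℕ) : ZMod n)
        · obtain ⟨hc1, hc2⟩ := hc
          subst hc2
          rw [dif_pos ⟨hc1, rfl⟩]
          rw [Finset.sum_eq_single
            (⟨t.1.1, ⟨(t.2 : ℕ) - (c : ℕ), by omega⟩, (t.1.2, s)⟩ : Idx n ℓ m)]
          · rw [XL_apply, dif_pos ⟨rfl, rfl, Nat.sub_le _ _⟩, Pi.single_apply,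
              if_pos (congrArg (Prod.mk _) (Fin.eq_of_val_eq
                (show (t.2 : ℕ) - ((t.2 : ℕ) - (c : ℕ)) = (c : ℕ) by omega))), mul_one]
          · intro p _ hpq
            obtain ⟨i', j', r', s'⟩ := p
            dsimp only
            rw [XL_apply]
            split_ifs with hcond
            · rw [Pi.single_apply, if_neg, mul_zero]
              intro heq
              apply hpq
              obtain ⟨h1, h2, h3⟩ := hcond
              have e1 : t.1.1 = i' := h1
              have e2 : ((t.1.2 : ℕ) : ℕ) = (r' : ℕ) := h2
              have e3 : (j' : ℕ) ≤ (t.2 : ℕ) := h3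
              injection heq with heq1 heq2
              have e4 : (t.2 : ℕ) - (j' : ℕ) = (c : ℕ) := congrArg Fin.val heq2
              injection heq1 with ha hs
              subst e1
              have ej : j' = ⟨(t.2 : ℕ) - (c : ℕ),
                  Nat.lt_of_le_of_lt (Nat.sub_le _ _) t.2.isLt⟩ :=
                Fin.eq_of_val_eq (show (j' : ℕ) = (t.2 : ℕ) - (c : ℕ) by omega)
              subst ej
              have es : s' = s := eq_of_heq hs
              subst es
              have er : r' = t.1.2 := Fin.eq_of_val_eq e2.symm
              subst er
              rfl
            · exact mul_zero _
          · intro h'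
            exact absurd (Finset.mem_univ _) h'
        · rw [dif_neg hc]
          symm
          apply Finset.sum_eq_zero
          intro p _
          obtain ⟨i', j', r', s'⟩ := p
          dsimp only
          rw [XL_apply]
          split_ifs with hcond
          · rw [Pi.single_apply, if_neg, mul_zero]
            intro heq
            apply hc
            obtain ⟨h1, h2, h3⟩ := hcond
            injection heq with heq1 heq2
            have e4 : (t.2 : ℕ) - (j' : ℕ) = (c : ℕ) := congrArg Fin.val heq2
            have e3 : (j' : ℕ) ≤ (t.2 : ℕ) := h3
            injection heq1 with ha hs
            have ha' : i' + ((j' : ℕ) : ZMod n) = a := ha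
            have h1' : t.1.1 = i' := h1
            refine ⟨by omega, ?_⟩
            rw [← ha', h1']
            rw [show ((j' : ℕ) : ZMod n) = (((t.2 : ℕ) - (c : ℕ) : ℕ) : ZMod n) from
              congrArg _ (by omega)]
          · exact mul_zero _
      rw [hrep]
      exact Submodule.sum_mem _ fun p _ =>
        Submodule.smul_mem _ _ (Submodule.subset_span ⟨p, rfl⟩)
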